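/- Lemma 3 (uncorrupted-step contraction): Let B\S index uncorrupted equations in the q-quantile with |B\S| ≥ (q-β)m, rows of A unit-norm, and ⟨a_i, x⟩ = b_i for i ∈ B\S. Then the average over i ∈ B\S of ‖x_{k+1} - x‖² (with the Kaczmarz update for equation i) is at most (1 - σ_{q-β,min}(A)²/(qm)) · ‖x_k - x‖². -/

import Mathlib

open RealInnerProductSpace Finset

/-- `σ_{r,min}`: the minimum over all row-subsets of cardinality `k` of the smallest
singular value of the corresponding row-submatrix. -/
noncomputable def sigmaRMin {m n : ℕ} (a : Fin m → EuclideanSpace ℝ (Fin n))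
    (k : ℕ) : ℝ :=
  sInf {t : ℝ | ∃ S : Finset (Fin m), S.card = k ∧
    ∃ y : EuclideanSpace ℝ (Fin n), ‖y‖ = 1 ∧
      t = Real.sqrt (∑ i ∈ S, ⟪a i, y⟫ ^ 2)}

/-- Lemma 3: contraction when averaging over the uncorrupted
equations `T = B \ S` in the `q`-quantile. -/
theorem uncorrupted_step_contraction {m n : ℕ} (a : Fin m → EuclideanSpace ℝ (Fin n))
    (x xk : EuclideanSpace ℝ (Fin n)) (b : Fin m → ℝ) (q β : ℝ)
    (T : Finset (Fin m))
    (hm : 0 < m)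
    (ha : ∀ i, ‖a i‖ = 1)
    (hβ : 0 < β) (hβq : β < q) (hq1 : q ≤ 1)
    (hcons : ∀ i ∈ T, ⟪a i, x⟫ = b i)
    (hTlow : (q - β) * m ≤ (T.card : ℝ))
    (hThigh : (T.card : ℝ) ≤ q * m) :
    (1 / T.card : ℝ) * ∑ i ∈ T, ‖xk + (b i - ⟪a i, xk⟫) • a i - x‖ ^ 2 ≤
      (1 - sigmaRMin a ⌈(q - β) * m⌉₊ ^ 2 / (q * m)) * ‖xk - x‖ ^ 2 := by
  set e := xk - x with he
  set σ := sigmaRMin a ⌈(q - β) * m⌉₊ with hσdef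
  have hm' : (0:ℝ) < m := by exact_mod_cast hm
  have hqm : (0:ℝ) < q * m := by nlinarith
  have hT0 : (0:ℝ) < T.card := by nlinarith
  have hTne : (T.card:ℝ) ≠ 0 := ne_of_gt hT0
  -- pointwise identity
  have key : ∀ i ∈ T, ‖xk + (b i - ⟪a i, xk⟫) • a i - x‖ ^ 2 = ‖e‖ ^ 2 - ⟪a i, e⟫ ^ 2 := by
    intro i hi
    have hb : b i - ⟪a i, xk⟫ = -⟪a i, e⟫ := by
      rw [he, inner_sub_right, ← hcons i hi]; ring
    have hv : xk + (b i - ⟪a i, xk⟫) • a i - x = e - ⟪a i, e⟫ • a i := by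
      rw [hb, he, neg_smul]; abel
    rw [hv, norm_sub_sq_real, real_inner_smul_right, real_inner_comm e (a i), norm_smul,
      ha i, mul_one, Real.norm_eq_abs, sq_abs]
    ring
  -- main spectral bound
  have main : σ ^ 2 / (q * m) * ‖e‖ ^ 2 ≤ (1 / T.card) * ∑ i ∈ T, ⟪a i, e⟫ ^ 2 := by
    by_cases hne : e = 0
    · simp [hne]
    · have hc : (0:ℝ) < ‖e‖ := norm_pos_iff.mpr hne
      obtain ⟨S, hST, hScard⟩ := Finset.exists_subset_card_eq (s := T) (n := ⌈(q - β) * m⌉₊)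
        (Nat.ceil_le.mpr hTlow)
      have hy : ‖(‖e‖⁻¹ • e : EuclideanSpace ℝ (Fin n))‖ = 1 := by
        rw [norm_smul, norm_inv, norm_norm, inv_mul_cancel₀ hc.ne']
      have hmem : Real.sqrt (∑ i ∈ S, ⟪a i, ‖e‖⁻¹ • e⟫ ^ 2) ∈
          {t : ℝ | ∃ S : Finset (Fin m), S.card = ⌈(q - β) * m⌉₊ ∧
            ∃ y : EuclideanSpace ℝ (Fin n), ‖y‖ = 1 ∧
              t = Real.sqrt (∑ i ∈ S, ⟪a i, y⟫ ^ 2)} :=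
        ⟨S, hScard, ‖e‖⁻¹ • e, hy, rfl⟩
      have hbdd : BddBelow {t : ℝ | ∃ S : Finset (Fin m), S.card = ⌈(q - β) * m⌉₊ ∧
          ∃ y : EuclideanSpace ℝ (Fin n), ‖y‖ = 1 ∧
            t = Real.sqrt (∑ i ∈ S, ⟪a i, y⟫ ^ 2)} := by
        refine ⟨0, fun t ht => ?_⟩
        obtain ⟨S', -, y, -, rfl⟩ := ht
        exact Real.sqrt_nonneg _
      have hσle : σ ≤ Real.sqrt (∑ i ∈ S, ⟪a i, ‖e‖⁻¹ • e⟫ ^ 2) :=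
        csInf_le hbdd hmem
      have hσ0 : 0 ≤ σ := by
        apply Real.sInf_nonneg
        rintro t ⟨S', -, y, -, rfl⟩
        exact Real.sqrt_nonneg _
      have hsum_nonneg : (0:ℝ) ≤ ∑ i ∈ S, ⟪a i, ‖e‖⁻¹ • e⟫ ^ 2 :=
        Finset.sum_nonneg fun i _ => sq_nonneg _
      have hσ2 : σ ^ 2 ≤ ∑ i ∈ S, ⟪a i, ‖e‖⁻¹ • e⟫ ^ 2 := by
        calc σ ^ 2 ≤ Real.sqrt (∑ i ∈ S, ⟪a i, ‖e‖⁻¹ • e⟫ ^ 2) ^ 2 :=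
              pow_le_pow_left₀ hσ0 hσle 2
          _ = _ := Real.sq_sqrt hsum_nonneg
      have hscale : ∑ i ∈ S, ⟪a i, ‖e‖⁻¹ • e⟫ ^ 2
          = ‖e‖⁻¹ ^ 2 * ∑ i ∈ S, ⟪a i, e⟫ ^ 2 := by
        rw [Finset.mul_sum]
        refine Finset.sum_congr rfl fun i _ => ?_
        rw [real_inner_smul_right]; ring
      have h1 : σ ^ 2 * ‖e‖ ^ 2 ≤ ∑ i ∈ S, ⟪a i, e⟫ ^ 2 := by
        rw [hscale] at hσ2
        have := mul_le_mul_of_nonneg_right hσ2 (le_of_lt (pow_pos hc 2))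
        calc σ ^ 2 * ‖e‖ ^ 2 ≤ ‖e‖⁻¹ ^ 2 * (∑ i ∈ S, ⟪a i, e⟫ ^ 2) * ‖e‖ ^ 2 := this
          _ = ∑ i ∈ S, ⟪a i, e⟫ ^ 2 := by
              field_simp
      have h2 : ∑ i ∈ S, ⟪a i, e⟫ ^ 2 ≤ ∑ i ∈ T, ⟪a i, e⟫ ^ 2 :=
        Finset.sum_le_sum_of_subset_of_nonneg hST fun i _ _ => sq_nonneg _
      have hsumT : (0:ℝ) ≤ ∑ i ∈ T, ⟪a i, e⟫ ^ 2 :=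
        Finset.sum_nonneg fun i _ => sq_nonneg _
      calc σ ^ 2 / (q * m) * ‖e‖ ^ 2 = σ ^ 2 * ‖e‖ ^ 2 / (q * m) := by ring
        _ ≤ (∑ i ∈ T, ⟪a i, e⟫ ^ 2) / (q * m) := by
            gcongr
            exact le_trans h1 h2
        _ ≤ (∑ i ∈ T, ⟪a i, e⟫ ^ 2) / (T.card : ℝ) := by
            apply div_le_div_of_nonneg_left hsumT hT0 hThigh
        _ = (1 / T.card) * ∑ i ∈ T, ⟪a i, e⟫ ^ 2 := by ring
  rw [Finset.sum_congr rfl key, Finset.sum_sub_distrib, Finset.sum_const, nsmul_eq_mul]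
  have expand : (1 / T.card : ℝ) * ((T.card : ℝ) * ‖e‖ ^ 2 - ∑ i ∈ T, ⟪a i, e⟫ ^ 2)
      = ‖e‖ ^ 2 - (1 / T.card) * ∑ i ∈ T, ⟪a i, e⟫ ^ 2 := by
    field_simp
  rw [expand]
  nlinarith [main]
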